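/- arXiv:2405.05172 — 2 statements merged into one kernel-verified Lean document; each statement's English description precedes it below -/
import Mathlib

section
/- Let (X,d) be a doubling metric space and (Y,d_Y) an arbitrary metric space. Let p > 1 and α ∈ (0,1), and let f : X → Y be a weak (p,α)-compactly Hölder mapping. Then for every bounded set E ⊆ X with upper Minkowski dimension dim_B E = d_E, the image satisfies dim_B f(E) ≤ p·d_E/(α·p + d_E). -/
open Filter Metric Set Topology MeasureTheory Bornology
open scoped ENNReal NNReal

noncomputable section

/-- `coverNum E r` is the smallest number of sets of diameter at most `r`
needed to cover `E` (`∞` if no finite cover exists). -/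
def coverNum {X : Type*} [MetricSpace X] (E : Set X) (r : ℝ) : ℝ≥0∞ :=
  ⨅ (n : ℕ) (_ : ∃ U : Fin n → Set X,
      (∀ i, EMetric.diam (U i) ≤ ENNReal.ofReal r) ∧ E ⊆ ⋃ i, U i), (n : ℝ≥0∞)

open scoped Classical in
/-- The upper Minkowski (box-counting) dimension:
`dim_B E = limsup_{r → 0⁺} log N(E,r) / log (1/r)`. -/
def dimB {X : Type*} [MetricSpace X] (E : Set X) : EReal :=
  Filter.limsup
    (fun r : ℝ =>
      if coverNum E r = ⊤ then (⊤ : EReal)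
      else ((Real.log (coverNum E r).toReal / Real.log (1 / r) : ℝ) : EReal))
    (𝓝[>] (0:ℝ))

/-- `X` is doubling with constant `Cd`: every ball of radius `2r` can be covered
by at most `Cd` balls of radius `r`. -/
def DoublingConst (X : Type*) [MetricSpace X] (Cd : ℝ) : Prop :=
  ∀ (x : X) (r : ℝ), 0 < r → ∃ t : Finset X,
    (t.card : ℝ) ≤ Cd ∧ Metric.ball x (2 * r) ⊆ ⋃ y ∈ t, Metric.ball y r

/-- A doubling metric space. -/
def DoublingSpace (X : Type*) [MetricSpace X] : Prop :=
  ∃ Cd : ℝ, 1 ≤ Cd ∧ DoublingConst X Cd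

/-- `f : X → Y` is weak `(p,α)`-compactly Hölder: in the situation of the
compactly Hölder definition there exist constants `C i ≥ 0` with
`diam f(B i) ≤ C i * (diam B i)^α` for every `i` and `Σ (C i)^p ≤ CE`. -/
def WeakCompactlyHolder {X Y : Type*} [MetricSpace X] [MetricSpace Y]
    (p α : ℝ) (f : X → Y) : Prop :=
  ∀ E : Set X, IsCompact E → ∀ ε ∈ Set.Ioo (0:ℝ) 1,
    ∃ rE > (0:ℝ), ∃ CE > (0:ℝ),
      ∀ (I : Type) (_ : Countable I) (c : I → X) (r : ℝ), 0 < r → r < rE →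
        (E ⊆ ⋃ i, Metric.ball (c i) r) →
        (Pairwise fun i j => Disjoint (Metric.ball (c i) (ε * r)) (Metric.ball (c j) (ε * r))) →
        ∃ C : I → ℝ≥0∞,
          (∀ i, EMetric.diam (f '' Metric.ball (c i) r) ≤
              C i * EMetric.diam (Metric.ball (c i) r) ^ α) ∧
          ∑' i, C i ^ p ≤ ENNReal.ofReal CE

/-- Packing lemma in a doubling space. -/
lemma pack_lemma {X : Type*} [MetricSpace X] {Cd : ℝ} (hCd : DoublingConst X Cd)
    {D0 : ℕ} (hD0 : Cd ≤ (D0 : ℝ)) :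
    ∀ (k : ℕ) (r : ℝ), 0 < r → ∀ (x : X) (S : Finset X),
      (↑S ⊆ Metric.ball x (2^k * (r/2))) →
      (∀ a ∈ S, ∀ b ∈ S, a ≠ b → r ≤ dist a b) → S.card ≤ D0^k := by
  classical
  intro k
  induction k with
  | zero =>
    intro r hr x S hS hsep
    simp only [pow_zero, one_mul]
    by_contra h
    push_neg at h
    obtain ⟨a, ha, b, hb, hab⟩ := Finset.one_lt_card.mp h
    have h1 := hS ha
    have h2 := hS hb
    simp only [Metric.mem_ball] at h1 h2
    have h3 : dist x b < r/2 := by rw [dist_comm]; simpa using h2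
    have : dist a b < r := by
      have := dist_triangle a x b; linarith
    exact absurd (hsep a ha b hb hab) (not_le.mpr this)
  | succ k ih =>
    intro r hr x S hS hsep
    obtain ⟨t, htc, htb⟩ := hCd x (2^k * (r/2)) (by positivity)
    have hsub : S ⊆ t.biUnion (fun y => S.filter (fun s => s ∈ Metric.ball y (2^k * (r/2)))) := by
      intro s hs
      have : s ∈ Metric.ball x (2 * (2^k * (r/2))) := by
        have := hS hs
        have e : (2:ℝ)^(k+1) * (r/2) = 2 * (2^k * (r/2)) := by ring
        rwa [e] at this
      obtain ⟨y, hy, hsy⟩ := by simpa using htb this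
      exact Finset.mem_biUnion.mpr ⟨y, hy, Finset.mem_filter.mpr ⟨hs, hsy⟩⟩
    calc S.card ≤ _ := Finset.card_le_card hsub
      _ ≤ ∑ y ∈ t, (S.filter (fun s => s ∈ Metric.ball y (2^k * (r/2)))).card :=
          Finset.card_biUnion_le
      _ ≤ ∑ _y ∈ t, D0^k := by
          refine Finset.sum_le_sum fun y _ => ih r hr y _ ?_ ?_
          · intro s hs
            simp only [Finset.coe_filter, Set.mem_setOf_eq] at hs
            exact hs.2
          · intro a ha b hb hab
            exact hsep a (Finset.filter_subset _ _ ha) b (Finset.filter_subset _ _ hb) hab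
      _ = t.card * D0^k := by rw [Finset.sum_const, smul_eq_mul]
      _ ≤ D0 * D0^k := by
          have : t.card ≤ D0 := by exact_mod_cast htc.trans hD0
          exact Nat.mul_le_mul_right _ this
      _ = D0^(k+1) := by ring

/-- Existence of a maximal `r`-separated subset of a bounded set in a doubling space. -/
lemma exists_maximal_sep {X : Type*} [MetricSpace X] {Cd : ℝ} (hCd : DoublingConst X Cd)
    {D0 : ℕ} (hD0 : Cd ≤ (D0 : ℝ)) {E : Set X} (hE : IsBounded E) (hne : E.Nonempty)
    {r : ℝ} (hr : 0 < r) :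
    ∃ S : Finset X, ↑S ⊆ E ∧ (∀ a ∈ S, ∀ b ∈ S, a ≠ b → r ≤ dist a b) ∧
      E ⊆ ⋃ y ∈ S, Metric.ball y r := by
  classical
  obtain ⟨x0, _hx0⟩ := hne
  obtain ⟨R, hR⟩ := hE.subset_ball x0
  obtain ⟨k, hk⟩ := pow_unbounded_of_one_lt (max R 1 / (r/2)) (one_lt_two (α := ℝ))
  have hball : E ⊆ Metric.ball x0 (2^k * (r/2)) := by
    refine hR.trans (Metric.ball_subset_ball ?_)
    have h1 : max R 1 / (r/2) < 2^k := hk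
    have h2 : max R 1 < 2^k * (r/2) := by
      rw [div_lt_iff₀ (by positivity)] at h1; linarith
    exact (le_max_left R 1).trans h2.le
  set P : ℕ → Prop := fun n => ∃ S : Finset X, ↑S ⊆ E ∧
      (∀ a ∈ S, ∀ b ∈ S, a ≠ b → r ≤ dist a b) ∧ S.card = n with hP
  have hbound : ∀ n, P n → n ≤ D0^k := by
    rintro n ⟨S, hSE, hsep, rfl⟩
    exact pack_lemma hCd hD0 k r hr x0 S (fun s hs => hball (hSE hs)) hsep
  have hP0 : P 0 := ⟨∅, by simp, by simp, rfl⟩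
  obtain ⟨S, hSE, hsep, hcard⟩ := Nat.findGreatest_spec (P := P) (n := D0^k) (Nat.zero_le _) hP0
  refine ⟨S, hSE, hsep, ?_⟩
  intro y hy
  by_contra hyc
  simp only [Set.mem_iUnion, Metric.mem_ball, not_exists, not_lt] at hyc
  have hyS : y ∉ S := fun h => absurd (hyc y h) (by simp [hr, not_le, dist_self] )
  have hsep' : ∀ a ∈ insert y S, ∀ b ∈ insert y S, a ≠ b → r ≤ dist a b := by
    intro a ha b hb hab
    rcases Finset.mem_insert.mp ha with rfl | ha' <;>
      rcases Finset.mem_insert.mp hb with rfl | hb'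
    · exact absurd rfl hab
    · exact hyc b hb'
    · rw [dist_comm]; exact hyc a ha'
    · exact hsep a ha' b hb' hab
  have hPn : P (S.card + 1) := by
    refine ⟨insert y S, ?_, hsep', ?_⟩
    · intro z hz
      rcases Finset.mem_insert.mp (by exact_mod_cast hz) with rfl | hz'
      · exact hy
      · exact hSE hz'
    · rw [Finset.card_insert_of_notMem hyS]
  have hle : S.card + 1 ≤ D0^k := hbound _ hPn
  have hlt : Nat.findGreatest P (D0^k) < S.card + 1 := by omega
  exact Nat.findGreatest_is_greatest hlt hle hPn

lemma sep_card_le_coverNum {X : Type*} [MetricSpace X] {E : Set X} {r r' : ℝ}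
    (h0 : 0 ≤ r') (hlt : r' < r) (S : Finset X) (hSE : ↑S ⊆ E)
    (hsep : ∀ a ∈ S, ∀ b ∈ S, a ≠ b → r ≤ dist a b) :
    (S.card : ℝ≥0∞) ≤ coverNum E r' := by
  classical
  refine le_iInf fun n => le_iInf fun h => ?_
  obtain ⟨U, hUd, hUc⟩ := h
  have hex : ∀ s ∈ S, ∃ i : Fin n, s ∈ U i := by
    intro s hs
    simpa using hUc (hSE hs)
  choose φ hφ using hex
  have hinj : Function.Injective (fun s : {x // x ∈ S} => φ s.1 s.2) := by
    rintro ⟨a, ha⟩ ⟨b, hb⟩ hab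
    simp only at hab
    by_contra hne
    have hne' : a ≠ b := fun h => hne (Subtype.ext h)
    have h1 : a ∈ U (φ a ha) := hφ a ha
    have h2 : b ∈ U (φ a ha) := by rw [hab]; exact hφ b hb
    have hd : edist a b ≤ ENNReal.ofReal r' :=
      le_trans (EMetric.edist_le_diam_of_mem h1 h2) (hUd _)
    rw [edist_dist, ENNReal.ofReal_le_ofReal_iff h0] at hd
    exact absurd (hsep a ha b hb hne') (not_le.mpr (lt_of_le_of_lt hd hlt))
  have hcard : S.card ≤ n := by
    have := Fintype.card_le_of_injective _ hinj
    simpa [Fintype.card_coe] using this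
  exact_mod_cast Nat.cast_le.mpr hcard

lemma coverNum_le_finset_card {Y : Type*} [MetricSpace Y] {A : Set Y} {t : ℝ}
    (T : Finset (Set Y)) (hd : ∀ U ∈ T, EMetric.diam U ≤ ENNReal.ofReal t)
    (hc : A ⊆ ⋃ U ∈ T, U) : coverNum A t ≤ T.card := by
  classical
  refine iInf_le_of_le T.card (iInf_le_of_le ?_ le_rfl)
  refine ⟨fun i => ((T.equivFin.symm i : Set Y)), fun i => hd _ (T.equivFin.symm i).2, ?_⟩
  intro a ha
  obtain ⟨U, hU, haU⟩ := by simpa using hc ha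
  exact Set.mem_iUnion.mpr ⟨T.equivFin ⟨U, hU⟩, by simpa using haU⟩

lemma coverNum_empty {X : Type*} [MetricSpace X] (r : ℝ) :
    coverNum (∅ : Set X) r = 0 := by
  refine le_antisymm ?_ zero_le
  refine iInf_le_of_le 0 (le_trans (iInf_le _ ?_) (by simp))
  exact ⟨fun i => i.elim0, fun i => i.elim0, by simp⟩

lemma dimB_empty {X : Type*} [MetricSpace X] : dimB (∅ : Set X) = 0 := by
  have : (fun r : ℝ =>
      if coverNum (∅ : Set X) r = ⊤ then (⊤ : EReal)
      else ((Real.log (coverNum (∅ : Set X) r).toReal / Real.log (1 / r) : ℝ) : EReal))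
      = fun _ => (0 : EReal) := by
    funext r
    rw [coverNum_empty]
    simp
  rw [dimB, this, limsup_const]

lemma dimB_le_poly {Y : Type*} [MetricSpace Y] {A : Set Y} {s A0 t0 : ℝ}
    (hA0 : 1 ≤ A0) (ht0 : 0 < t0) (hs : 0 ≤ s)
    (h : ∀ t ∈ Set.Ioo (0:ℝ) t0, coverNum A t ≤ ENNReal.ofReal (A0 * t ^ (-s))) :
    dimB A ≤ (s : EReal) := by
  classical
  set v : ℝ → EReal := fun t => ((s + Real.log A0 / Real.log (1 / t) : ℝ) : EReal) with hv
  have hlim : Filter.Tendsto v (𝓝[>] (0:ℝ)) (𝓝 (s : EReal)) := by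
    rw [hv]
    rw [EReal.tendsto_coe (a := s)]
    have h1 : Filter.Tendsto (fun t : ℝ => Real.log (1 / t)) (𝓝[>] (0:ℝ)) Filter.atTop := by
      refine Real.tendsto_log_atTop.comp ?_
      exact (tendsto_inv_nhdsGT_zero (𝕜 := ℝ)).congr (fun x => (one_div x).symm)
    have h2 : Filter.Tendsto (fun t : ℝ => Real.log A0 / Real.log (1 / t)) (𝓝[>] (0:ℝ))
        (𝓝 0) := Filter.Tendsto.div_atTop tendsto_const_nhds h1
    simpa using (tendsto_const_nhds (x := s)).add h2
  have hev : (fun r : ℝ =>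
      if coverNum A r = ⊤ then (⊤ : EReal)
      else ((Real.log (coverNum A r).toReal / Real.log (1 / r) : ℝ) : EReal)) ≤ᶠ[𝓝[>] (0:ℝ)] v := by
    filter_upwards [Ioo_mem_nhdsGT_of_mem (by constructor <;> [exact le_refl 0; positivity] :
      (0:ℝ) ∈ Set.Ico 0 (min t0 (1/2)))] with t ht
    obtain ⟨ht1, ht2⟩ := ht
    have htt0 : t < t0 := lt_of_lt_of_le ht2 (min_le_left _ _)
    have hth : t < 1/2 := lt_of_lt_of_le ht2 (min_le_right _ _)
    have hN := h t ⟨ht1, htt0⟩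
    have hNne : coverNum A t ≠ ⊤ := by
      intro hc; rw [hc, top_le_iff] at hN
      exact ENNReal.ofReal_ne_top hN
    have hlog1t : Real.log 2 ≤ Real.log (1 / t) := by
      apply Real.log_le_log (by norm_num)
      rw [le_one_div (by norm_num) ht1]
      linarith
    have hlogpos : 0 < Real.log (1 / t) := lt_of_lt_of_le (Real.log_pos (by norm_num)) hlog1t
    have hx0 : (0:ℝ) < A0 * t ^ (-s) := by positivity
    have hNt : (coverNum A t).toReal ≤ A0 * t ^ (-s) := by
      have := ENNReal.toReal_mono (ENNReal.ofReal_ne_top) hN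
      rwa [ENNReal.toReal_ofReal hx0.le] at this
    have hlogN : Real.log (coverNum A t).toReal ≤ Real.log A0 + s * Real.log (1 / t) := by
      have hrhs : Real.log (A0 * t ^ (-s)) = Real.log A0 + s * Real.log (1 / t) := by
        rw [Real.log_mul (by positivity) (by positivity), Real.log_rpow ht1]
        rw [Real.log_div (by norm_num) (ne_of_gt ht1), Real.log_one]
        ring
      rcases le_or_gt (coverNum A t).toReal 0 with h0 | h0
      · have : Real.log (coverNum A t).toReal = 0 := by
          rcases eq_or_lt_of_le h0 with he | hl
          · rw [he, Real.log_zero]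
          · exact absurd hl (not_lt.mpr ENNReal.toReal_nonneg)
        rw [this, ← hrhs]
        refine Real.log_nonneg ?_
        have h1 : (1:ℝ) ≤ t ^ (-s) :=
          Real.one_le_rpow_of_pos_of_le_one_of_nonpos ht1 (by linarith) (by linarith)
        nlinarith
      · rw [← hrhs]
        exact Real.log_le_log h0 hNt
    rw [if_neg hNne]
    have : Real.log (coverNum A t).toReal / Real.log (1 / t) ≤
        s + Real.log A0 / Real.log (1 / t) := by
      rw [div_le_iff₀ hlogpos]
      have : (s + Real.log A0 / Real.log (1 / t)) * Real.log (1 / t)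
          = s * Real.log (1 / t) + Real.log A0 := by
        field_simp
      rw [this]
      linarith
    simp only [hv]
    exact_mod_cast EReal.coe_le_coe_iff.mpr this
  calc dimB A ≤ Filter.limsup v (𝓝[>] (0:ℝ)) := Filter.limsup_le_limsup hev
    _ = (s : EReal) := hlim.limsup_eq

lemma coverNum_one_le {X : Type*} [MetricSpace X] {E : Set X} (hne : E.Nonempty) (r : ℝ) :
    1 ≤ coverNum E r := by
  refine le_iInf fun n => le_iInf fun h => ?_
  obtain ⟨U, _, hUc⟩ := h
  rcases Nat.eq_zero_or_pos n with rfl | hn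
  · obtain ⟨x, hx⟩ := hne
    obtain ⟨i, -⟩ := Set.mem_iUnion.mp (hUc hx)
    exact i.elim0
  · exact_mod_cast Nat.one_le_cast.mpr hn

lemma dimB_nonneg_of_nonempty {X : Type*} [MetricSpace X] {E : Set X} (hne : E.Nonempty) :
    (0 : EReal) ≤ dimB E := by
  classical
  refine Filter.le_limsup_of_frequently_le ?_
  refine Filter.Eventually.frequently ?_
  filter_upwards [Ioo_mem_nhdsGT_of_mem (by constructor <;> norm_num :
    (0:ℝ) ∈ Set.Ico 0 1)] with ρ hρ
  obtain ⟨hρ0, hρ1⟩ := hρ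
  split_ifs with hc
  · exact le_top
  · have h1 : (1:ℝ≥0∞) ≤ coverNum E ρ := coverNum_one_le hne ρ
    have ht : (1:ℝ) ≤ (coverNum E ρ).toReal := by
      have := ENNReal.toReal_mono hc h1
      simpa using this
    have hlog : 0 ≤ Real.log (coverNum E ρ).toReal := Real.log_nonneg ht
    have hlogpos : 0 < Real.log (1 / ρ) := Real.log_pos (by rw [lt_one_div (by norm_num) hρ0]; linarith)
    have : (0:ℝ) ≤ Real.log (coverNum E ρ).toReal / Real.log (1 / ρ) := by positivity
    exact_mod_cast EReal.coe_le_coe_iff.mpr this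

lemma coverNum_eventual_bound {X : Type*} [MetricSpace X] {E : Set X} {dE d' : ℝ}
    (hdE : dimB E = (dE : EReal)) (hd : dE < d') (hd0 : 0 < d') :
    ∃ δ : ℝ, 0 < δ ∧ δ ≤ 1 ∧ ∀ ρ ∈ Set.Ioo (0:ℝ) δ,
      coverNum E ρ ≠ ⊤ ∧ coverNum E ρ ≤ ENNReal.ofReal (ρ ^ (-d')) := by
  classical
  have hlt : dimB E < (d' : EReal) := by rw [hdE]; exact_mod_cast hd
  have hev := Filter.eventually_lt_of_limsup_lt hlt
  have hev2 : ∀ᶠ ρ in 𝓝[>] (0:ℝ), ρ ∈ Set.Ioo (0:ℝ) 1 :=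
    Ioo_mem_nhdsGT_of_mem (by constructor <;> norm_num)
  obtain ⟨u, hu, hsub⟩ := mem_nhdsGT_iff_exists_Ioo_subset.mp (hev.and hev2)
  refine ⟨min u 1, by simp [hu, Set.mem_Ioi.mp hu], min_le_right _ _, ?_⟩
  intro ρ hρ
  obtain ⟨hρ0, hρu⟩ := hρ
  have hmem := hsub ⟨hρ0, lt_of_lt_of_le hρu (min_le_left _ _)⟩
  obtain ⟨hval, hρ0', hρ1⟩ := hmem
  by_cases hc : coverNum E ρ = ⊤
  · rw [if_pos hc] at hval
    exact absurd hval (by simp)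
  · rw [if_neg hc] at hval
    refine ⟨hc, ?_⟩
    have hval' : Real.log (coverNum E ρ).toReal / Real.log (1 / ρ) < d' := by
      exact_mod_cast hval
    have hlogpos : 0 < Real.log (1 / ρ) :=
      Real.log_pos (by rw [lt_one_div (by norm_num) hρ0]; linarith)
    have hrpow : (1:ℝ) ≤ ρ ^ (-d') :=
      Real.one_le_rpow_of_pos_of_le_one_of_nonpos hρ0 hρ1.le (by linarith)
    rw [ENNReal.le_ofReal_iff_toReal_le hc (by linarith)]
    rcases le_or_gt (coverNum E ρ).toReal 1 with h1 | h1
    · linarith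
    · have hlogN : Real.log (coverNum E ρ).toReal < d' * Real.log (1 / ρ) :=
        (div_lt_iff₀ hlogpos).mp hval'
      have : Real.log (coverNum E ρ).toReal < Real.log (ρ ^ (-d')) := by
        rw [Real.log_rpow hρ0]
        rw [Real.log_div (by norm_num) (ne_of_gt hρ0), Real.log_one] at hlogN
        linarith
      have := Real.exp_lt_exp.mpr this
      rw [Real.exp_log (by linarith), Real.exp_log (by positivity)] at this
      linarith

set_option maxHeartbeats 1000000 in
lemma key_bound {X Y : Type*} [MetricSpace X] [MetricSpace Y]
    {Cd : ℝ} (hCd : DoublingConst X Cd) {D0 : ℕ} (hD0 : Cd ≤ (D0 : ℝ))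
    {p α : ℝ} (hp : 1 < p) (hα : α ∈ Set.Ioo (0:ℝ) 1) {f : X → Y}
    {E : Set X} (hE : IsBounded E) (hne : E.Nonempty)
    {rE CE : ℝ} (hrE : 0 < rE) (hCE : 0 < CE)
    (H : ∀ (I : Type) (_ : Countable I) (c : I → X) (r : ℝ), 0 < r → r < rE →
        (Pairwise fun i j => Disjoint (Metric.ball (c i) ((1/2) * r)) (Metric.ball (c j) ((1/2) * r))) →
        ∃ C : I → ℝ≥0∞,
          (∀ i, EMetric.diam (f '' Metric.ball (c i) r) ≤
              C i * EMetric.diam (Metric.ball (c i) r) ^ α) ∧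
          ∑' i, C i ^ p ≤ ENNReal.ofReal CE)
    {d' δE : ℝ} (hd'0 : 0 < d') (hδE : 0 < δE) (hδE1 : δE ≤ 1)
    (hEcov : ∀ ρ ∈ Set.Ioo (0:ℝ) δE, coverNum E ρ ≤ ENNReal.ofReal (ρ ^ (-d'))) :
    ∃ A0 t0 : ℝ, 1 ≤ A0 ∧ 0 < t0 ∧ ∀ t ∈ Set.Ioo (0:ℝ) t0,
      coverNum (f '' E) t ≤ ENNReal.ofReal (A0 * t ^ (-(p * d' / (α * p + d')))) := by
  classical
  obtain ⟨hα0, hα1⟩ := hα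
  have hp0 : 0 < p := by linarith
  have hD : 0 < α * p + d' := by positivity
  obtain ⟨β, hβdef⟩ : ∃ x : ℝ, x = p / (α * p + d') := ⟨_, rfl⟩
  have hβ0 : 0 < β := by rw [hβdef]; positivity
  have hβD : β * (α * p + d') = p := by rw [hβdef]; field_simp
  obtain ⟨s, hsdef⟩ : ∃ x : ℝ, x = β * d' := ⟨_, rfl⟩
  have hs_eq : s = p * d' / (α * p + d') := by rw [hsdef, hβdef]; ring
  have hs0 : 0 < s := by rw [hsdef, hβdef]; positivity
  set q : ℝ := (1/2 : ℝ) ^ (α * p) with hqdef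
  have hq0 : 0 < q := by positivity
  have hq1 : q < 1 := Real.rpow_lt_one (by norm_num) (by norm_num) (by positivity)
  set Rs : ℝ := min rE δE with hRs
  have hRs0 : 0 < Rs := lt_min hrE hδE
  set A0 : ℝ := (2:ℝ) ^ d' + (D0:ℝ)^3 * CE * (2:ℝ) ^ (α*p) * (1/(1-q)) with hA0def
  have hA0_1 : 1 ≤ A0 := by
    have h1 : (1:ℝ) ≤ (2:ℝ) ^ d' := Real.one_le_rpow (by norm_num) hd'0.le
    have h2 : (0:ℝ) ≤ (D0:ℝ)^3 * CE * (2:ℝ) ^ (α*p) * (1/(1-q)) := by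
      have : (0:ℝ) < 1 - q := by linarith
      positivity
    rw [hA0def]; linarith
  refine ⟨A0, min 1 (Rs ^ (1/β)), hA0_1, by positivity, ?_⟩
  rintro t ⟨ht0, ht1⟩
  have htlt1 : t < 1 := lt_of_lt_of_le ht1 (min_le_left _ _)
  set r : ℝ := t ^ β with hrdef
  have hr0 : 0 < r := Real.rpow_pos_of_pos ht0 _
  have hrRs : r < Rs := by
    have h1 : t < Rs ^ (1/β) := lt_of_lt_of_le ht1 (min_le_right _ _)
    have h2 : t ^ β < (Rs ^ (1/β)) ^ β := Real.rpow_lt_rpow ht0.le h1 hβ0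
    have h3 : (Rs ^ (1/β)) ^ β = Rs := by
      rw [← Real.rpow_mul hRs0.le, one_div, inv_mul_cancel₀ hβ0.ne', Real.rpow_one]
    rwa [h3] at h2
  have hrrE : r < rE := lt_of_lt_of_le hrRs (min_le_left _ _)
  have hrδE : r < δE := lt_of_lt_of_le hrRs (min_le_right _ _)
  -- scales
  set rad : ℕ → ℝ := fun j => r / 2 ^ j with hraddef
  have hradpos : ∀ j, 0 < rad j := fun j => by positivity
  have hradle : ∀ j, rad j ≤ r := fun j => by
    rw [hraddef]
    exact div_le_self hr0.le (one_le_pow₀ one_le_two)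
  have hradrE : ∀ j, rad j < rE := fun j => lt_of_le_of_lt (hradle j) hrrE
  have hradsucc : ∀ j, rad (j+1) = rad j / 2 := fun j => by
    show r / 2 ^ (j+1) = r / 2 ^ j / 2
    rw [pow_succ]; ring
  -- separated nets
  have hsepnet : ∀ j : ℕ, ∃ S : Finset X, ↑S ⊆ E ∧
      (∀ a ∈ S, ∀ b ∈ S, a ≠ b → rad j ≤ dist a b) ∧
      E ⊆ ⋃ y ∈ S, Metric.ball y (rad j) :=
    fun j => exists_maximal_sep hCd hD0 hE hne (hradpos j)
  choose S hSE hSsep hScov using hsepnet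
  set n : ℕ → ℕ := fun j => (S j).card with hndef
  set c : ∀ j : ℕ, Fin (n j) → X := fun j i => ((S j).equivFin.symm i : X) with hcdef
  have hcmem : ∀ j i, c j i ∈ S j := fun j i => ((S j).equivFin.symm i).2
  have hcinj : ∀ j, Function.Injective (c j) := by
    intro j i i' h
    exact (Equiv.injective _ (Subtype.ext h))
  have hccov : ∀ j, E ⊆ ⋃ i : Fin (n j), Metric.ball (c j i) (rad j) := by
    intro j z hz
    obtain ⟨y, hy, hzy⟩ := Set.mem_iUnion₂.mp (hScov j hz)
    refine Set.mem_iUnion.mpr ⟨(S j).equivFin ⟨y, hy⟩, ?_⟩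
    have : c j ((S j).equivFin ⟨y, hy⟩) = y := by
      rw [hcdef]; simp
    rwa [this]
  have hcdisj : ∀ j, Pairwise fun i i' => Disjoint (Metric.ball (c j i) ((1/2) * rad j))
      (Metric.ball (c j i') ((1/2) * rad j)) := by
    intro j i i' hii'
    refine Metric.ball_disjoint_ball ?_
    have hne' : c j i ≠ c j i' := fun h => hii' (hcinj j h)
    have := hSsep j _ (hcmem j i) _ (hcmem j i') hne'
    linarith
  -- apply the Hölder hypothesis at every scale
  have hH : ∀ j : ℕ, ∃ C : Fin (n j) → ℝ≥0∞,
      (∀ i, EMetric.diam (f '' Metric.ball (c j i) (rad j)) ≤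
          C i * EMetric.diam (Metric.ball (c j i) (rad j)) ^ α) ∧
      ∑' i, C i ^ p ≤ ENNReal.ofReal CE :=
    fun j => H (Fin (n j)) inferInstance (c j) (rad j) (hradpos j) (hradrE j) (hcdisj j)
  choose C hCdiam hCsum using hH
  have hdb : ∀ j i, EMetric.diam (Metric.ball (c j i) (rad j)) ≤ ENNReal.ofReal (2 * rad j) := by
    intro j i
    rw [← Metric.emetric_ball]
    refine le_trans EMetric.diam_ball ?_
    rw [ENNReal.ofReal_mul (by norm_num)]
    simp
  have himg : ∀ j i, EMetric.diam (f '' Metric.ball (c j i) (rad j)) ≤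
      C j i * ENNReal.ofReal ((2 * rad j) ^ α) := by
    intro j i
    refine le_trans (hCdiam j i) (mul_le_mul_right ?_ _)
    rw [← ENNReal.ofReal_rpow_of_pos (by positivity)]
    exact ENNReal.rpow_le_rpow (hdb j i) hα0.le
  -- good and bad indices
  set Good : ∀ j : ℕ, Finset (Fin (n j)) := fun j =>
    Finset.univ.filter (fun i =>
      EMetric.diam (f '' Metric.ball (c j i) (rad j)) ≤ ENNReal.ofReal t) with hGooddef
  set Bad : ∀ j : ℕ, Finset (Fin (n j)) := fun j =>
    Finset.univ.filter (fun i =>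
      ¬ (EMetric.diam (f '' Metric.ball (c j i) (rad j)) ≤ ENNReal.ofReal t)) with hBaddef
  have htp : 0 < t ^ p := Real.rpow_pos_of_pos ht0 p
  have hu' : ∀ j, 0 < (2 * rad j) ^ (α * p) := fun j => by
    have := hradpos j; positivity
  have hbadC : ∀ j, ∀ i ∈ Bad j,
      ENNReal.ofReal (t ^ p / (2 * rad j) ^ (α * p)) ≤ C j i ^ p := by
    intro j i hi
    rw [hBaddef, Finset.mem_filter] at hi
    have hlt : ENNReal.ofReal t < C j i * ENNReal.ofReal ((2 * rad j) ^ α) :=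
      lt_of_lt_of_le (not_le.mp hi.2) (himg j i)
    have hupos : (0:ℝ) < (2 * rad j) ^ α := by have := hradpos j; positivity
    have hdiv : ENNReal.ofReal t / ENNReal.ofReal ((2 * rad j) ^ α) ≤ C j i := by
      rw [ENNReal.div_le_iff_le_mul (Or.inl (by simp [hupos])) (Or.inl ENNReal.ofReal_ne_top)]
      exact hlt.le
    have := ENNReal.rpow_le_rpow hdiv hp0.le
    have heq : (ENNReal.ofReal t / ENNReal.ofReal ((2 * rad j) ^ α)) ^ p
        = ENNReal.ofReal (t ^ p / (2 * rad j) ^ (α * p)) := by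
      rw [← ENNReal.ofReal_div_of_pos hupos, ENNReal.ofReal_rpow_of_pos (by positivity),
        Real.div_rpow ht0.le hupos.le, ← Real.rpow_mul (by have := hradpos j; positivity)]
    rwa [heq] at this
  have hbadcard : ∀ j, ((Bad j).card : ℝ) ≤ CE * ((2 * rad j) ^ (α * p) / t ^ p) := by
    intro j
    have hsum : (Bad j).card • ENNReal.ofReal (t ^ p / (2 * rad j) ^ (α * p))
        ≤ ENNReal.ofReal CE := by
      refine le_trans (Finset.card_nsmul_le_sum _ _ _ (hbadC j)) ?_
      refine le_trans (Finset.sum_le_sum_of_subset (Finset.subset_univ _)) ?_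
      rw [← tsum_fintype (L := SummationFilter.unconditional _)]
      exact hCsum j
    rw [nsmul_eq_mul, show ((Bad j).card : ℝ≥0∞) = ENNReal.ofReal ((Bad j).card : ℝ) by
        rw [ENNReal.ofReal_natCast],
      ← ENNReal.ofReal_mul (by positivity)] at hsum
    have hre : ((Bad j).card : ℝ) * (t ^ p / (2 * rad j) ^ (α * p)) ≤ CE :=
      (ENNReal.ofReal_le_ofReal_iff hCE.le).mp hsum
    have hmul := mul_le_mul_of_nonneg_right hre (le_of_lt (div_pos (hu' j) htp))
    calc ((Bad j).card : ℝ)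
        = ((Bad j).card : ℝ) * (t ^ p / (2 * rad j) ^ (α * p))
            * ((2 * rad j) ^ (α * p) / t ^ p) := by
          have := hu' j; field_simp
      _ ≤ CE * ((2 * rad j) ^ (α * p) / t ^ p) := hmul
  -- terminal level
  set θ : ℝ := (t / CE ^ (1/p)) ^ (1/α) with hθdef
  have hCEp : 0 < CE ^ (1/p) := Real.rpow_pos_of_pos hCE _
  have hθ0 : 0 < θ := Real.rpow_pos_of_pos (div_pos ht0 hCEp) _
  obtain ⟨m, hm⟩ := pow_unbounded_of_one_lt (2 * r / θ) (one_lt_two (α := ℝ))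
  have hmθ : 2 * rad m ≤ θ := by
    rw [div_lt_iff₀ hθ0] at hm
    have h2m : (0:ℝ) < 2 ^ m := by positivity
    have : 2 * rad m = 2 * r / 2 ^ m := by rw [hraddef]; ring
    rw [this, div_le_iff₀ h2m]
    nlinarith
  have hallgood : ∀ i : Fin (n m),
      EMetric.diam (f '' Metric.ball (c m i) (rad m)) ≤ ENNReal.ofReal t := by
    intro i
    have h1 : C m i ^ p ≤ ENNReal.ofReal CE := by
      refine le_trans ?_ (hCsum m)
      rw [tsum_fintype]
      exact Finset.single_le_sum (f := fun i => C m i ^ p) (fun _ _ => zero_le)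
        (Finset.mem_univ i)
    have h2 : C m i ≤ ENNReal.ofReal (CE ^ (1/p)) := by
      have h := ENNReal.rpow_le_rpow h1 (le_of_lt (by positivity : (0:ℝ) < 1/p))
      rwa [← ENNReal.rpow_mul, mul_one_div, div_self hp0.ne', ENNReal.rpow_one,
        ENNReal.ofReal_rpow_of_pos hCE] at h
    refine le_trans (himg m i) ?_
    refine le_trans (mul_le_mul_left h2 _) ?_
    rw [← ENNReal.ofReal_mul (by positivity)]
    refine ENNReal.ofReal_le_ofReal ?_
    have h4 : (2 * rad m) ^ α ≤ θ ^ α :=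
      Real.rpow_le_rpow (by have := hradpos m; positivity) hmθ hα0.le
    have h5 : θ ^ α = t / CE ^ (1/p) := by
      rw [hθdef, ← Real.rpow_mul (by positivity), one_div_mul_cancel hα0.ne',
        Real.rpow_one]
    calc CE ^ (1/p) * (2 * rad m) ^ α ≤ CE ^ (1/p) * θ ^ α :=
          mul_le_mul_of_nonneg_left h4 hCEp.le
      _ = t := by rw [h5]; field_simp
  -- used good balls
  set Used : ∀ j : ℕ, Finset (Fin (n (j+1))) := fun j =>
    (Good (j+1)).filter (fun i => ∃ z ∈ E, z ∈ Metric.ball (c (j+1) i) (rad (j+1)) ∧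
      ∀ i' ∈ Good j, z ∉ Metric.ball (c j i') (rad j)) with hUseddef
  have hUsedcard : ∀ j, (Used j).card ≤ D0^3 * (Bad j).card := by
    intro j
    have hsub : Used j ⊆ (Bad j).biUnion (fun i' =>
        Finset.univ.filter (fun i : Fin (n (j+1)) =>
          c (j+1) i ∈ Metric.ball (c j i') (2 * rad j))) := by
      intro i hi
      rw [hUseddef, Finset.mem_filter] at hi
      obtain ⟨higood, z, hzE, hzball, hzavoid⟩ := hi
      obtain ⟨i', hzi'⟩ := Set.mem_iUnion.mp (hccov j hzE)
      have hi'bad : i' ∈ Bad j := by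
        rw [hBaddef, Finset.mem_filter]
        refine ⟨Finset.mem_univ _, fun hgood => ?_⟩
        exact hzavoid i' (by rw [hGooddef, Finset.mem_filter]
                             exact ⟨Finset.mem_univ _, hgood⟩) hzi'
      refine Finset.mem_biUnion.mpr ⟨i', hi'bad,
        Finset.mem_filter.mpr ⟨Finset.mem_univ _, ?_⟩⟩
      rw [Metric.mem_ball]
      have d1 : dist (c (j+1) i) z < rad (j+1) := by
        rw [dist_comm]; exact Metric.mem_ball.mp hzball
      have d2 : dist z (c j i') < rad j := Metric.mem_ball.mp hzi'
      have hrs := hradsucc j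
      have hrp := hradpos j
      calc dist (c (j+1) i) (c j i') ≤ dist (c (j+1) i) z + dist z (c j i') :=
            dist_triangle _ _ _
        _ < rad (j+1) + rad j := by linarith
        _ ≤ 2 * rad j := by rw [hrs]; linarith
    refine le_trans (Finset.card_le_card hsub) (le_trans Finset.card_biUnion_le ?_)
    have heach : ∀ i' ∈ Bad j, (Finset.univ.filter (fun i : Fin (n (j+1)) =>
        c (j+1) i ∈ Metric.ball (c j i') (2 * rad j))).card ≤ D0^3 := by
      intro i' _
      set F := Finset.univ.filter (fun i : Fin (n (j+1)) =>
        c (j+1) i ∈ Metric.ball (c j i') (2 * rad j)) with hFdef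
      have himgcard : (F.image (c (j+1))).card = F.card :=
        Finset.card_image_of_injOn ((hcinj (j+1)).injOn)
      have hpack : (F.image (c (j+1))).card ≤ D0^3 := by
        refine pack_lemma hCd hD0 3 (rad (j+1)) (hradpos (j+1)) (c j i')
          (F.image (c (j+1))) ?_ ?_
        · intro x hx
          obtain ⟨i, hiF, rfl⟩ := Finset.mem_image.mp (by exact_mod_cast hx)
          rw [hFdef, Finset.mem_filter] at hiF
          have : (2:ℝ)^3 * (rad (j+1) / 2) = 2 * rad j := by rw [hradsucc j]; ring
          rw [this]
          exact hiF.2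
        · intro a ha b hb hab
          obtain ⟨ia, _, rfl⟩ := Finset.mem_image.mp ha
          obtain ⟨ib, _, rfl⟩ := Finset.mem_image.mp hb
          exact hSsep (j+1) _ (hcmem (j+1) ia) _ (hcmem (j+1) ib) hab
      calc F.card = (F.image (c (j+1))).card := himgcard.symm
        _ ≤ D0^3 := hpack
    calc ∑ i' ∈ Bad j, (Finset.univ.filter (fun i : Fin (n (j+1)) =>
          c (j+1) i ∈ Metric.ball (c j i') (2 * rad j))).card
        ≤ ∑ _i' ∈ Bad j, D0^3 := Finset.sum_le_sum heach
      _ = (Bad j).card * D0^3 := by rw [Finset.sum_const, smul_eq_mul]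
      _ = D0^3 * (Bad j).card := mul_comm _ _
  -- the final cover
  set g : ∀ j : ℕ, Fin (n j) → Set Y := fun j i => f '' Metric.ball (c j i) (rad j) with hgdef
  set TT : Finset (Set Y) := ((Good 0).image (g 0)) ∪
    (Finset.range m).biUnion (fun j => (Used j).image (g (j+1))) with hTTdef
  have hTd : ∀ U ∈ TT, EMetric.diam U ≤ ENNReal.ofReal t := by
    intro U hU
    rw [hTTdef, Finset.mem_union] at hU
    rcases hU with hU | hU
    · obtain ⟨i, hi, rfl⟩ := Finset.mem_image.mp hU
      rw [hGooddef, Finset.mem_filter] at hi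
      exact hi.2
    · obtain ⟨j, _, hU2⟩ := Finset.mem_biUnion.mp hU
      obtain ⟨i, hi, rfl⟩ := Finset.mem_image.mp hU2
      rw [hUseddef, Finset.mem_filter] at hi
      have h := hi.1
      rw [hGooddef, Finset.mem_filter] at h
      exact h.2
  have hTc : f '' E ⊆ ⋃ U ∈ TT, U := by
    rintro _ ⟨z, hzE, rfl⟩
    have hPmm : ∃ i, i ∈ Good m ∧ z ∈ Metric.ball (c m i) (rad m) := by
      obtain ⟨i, hi⟩ := Set.mem_iUnion.mp (hccov m hzE)
      exact ⟨i, by rw [hGooddef, Finset.mem_filter]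
                   exact ⟨Finset.mem_univ _, hallgood i⟩, hi⟩
    have hPex : ∃ j : ℕ, ∃ i, i ∈ Good j ∧ z ∈ Metric.ball (c j i) (rad j) := ⟨m, hPmm⟩
    have hfind := Nat.find_spec hPex
    have hj0le : Nat.find hPex ≤ m := Nat.find_le hPmm
    have hmin : ∀ k, k < Nat.find hPex → ¬ ∃ i, i ∈ Good k ∧ z ∈ Metric.ball (c k i) (rad k) :=
      fun k hk => Nat.find_min hPex hk
    set j0 := Nat.find hPex
    clear_value j0
    cases j0 with
    | zero =>
      obtain ⟨i, higood, hiball⟩ := hfind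
      refine Set.mem_biUnion (?_ : g 0 i ∈ TT) (Set.mem_image_of_mem f hiball)
      rw [hTTdef, Finset.mem_union]
      exact Or.inl (Finset.mem_image_of_mem _ higood)
    | succ j =>
      obtain ⟨i, higood, hiball⟩ := hfind
      have hnotj := hmin j (Nat.lt_succ_self j)
      push_neg at hnotj
      have hiused : i ∈ Used j := by
        rw [hUseddef, Finset.mem_filter]
        exact ⟨higood, z, hzE, hiball, hnotj⟩
      refine Set.mem_biUnion (?_ : g (j+1) i ∈ TT) (Set.mem_image_of_mem f hiball)
      rw [hTTdef, Finset.mem_union]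
      refine Or.inr (Finset.mem_biUnion.mpr ⟨j, Finset.mem_range.mpr (by omega), ?_⟩)
      exact Finset.mem_image_of_mem _ hiused
  -- counting
  have hcovT : coverNum (f '' E) t ≤ (TT.card : ℝ≥0∞) := coverNum_le_finset_card TT hTd hTc
  have hTTcard : TT.card ≤ (Good 0).card + ∑ j ∈ Finset.range m, (Used j).card := by
    refine le_trans (Finset.card_union_le _ _) (add_le_add Finset.card_image_le ?_)
    exact le_trans Finset.card_biUnion_le (Finset.sum_le_sum fun j _ => Finset.card_image_le)
  -- bound on the level-0 net
  have hrad0 : rad 0 = r := by rw [hraddef]; simp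
  have hN0 : ((S 0).card : ℝ) ≤ (r/2) ^ (-d') := by
    have h1 : (((S 0).card : ℕ) : ℝ≥0∞) ≤ coverNum E (r/2) := by
      refine sep_card_le_coverNum (by positivity) (by linarith : r/2 < r) (S 0) (hSE 0) ?_
      intro a ha b hb hab
      have := hSsep 0 a ha b hb hab
      rwa [hrad0] at this
    have h2 : coverNum E (r/2) ≤ ENNReal.ofReal ((r/2) ^ (-d')) :=
      hEcov (r/2) ⟨by positivity, by linarith⟩
    have h3 := le_trans h1 h2
    rw [ENNReal.le_ofReal_iff_toReal_le (by simp) (by positivity)] at h3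
    simpa using h3
  have hG0 : ((Good 0).card : ℝ) ≤ (r/2) ^ (-d') := by
    refine le_trans ?_ hN0
    have : (Good 0).card ≤ (S 0).card := by
      refine le_trans (Finset.card_le_univ _) ?_
      simp [hndef]
    exact_mod_cast this
  -- per-level bound for used balls
  have hradpow : ∀ j, (2 * rad j) ^ (α*p) = (2*r) ^ (α*p) * q^j := by
    intro j
    have h2r : 2 * rad j = (2*r) * ((1/2:ℝ))^j := by
      show 2 * (r / 2^j) = 2*r * ((1/2:ℝ))^j
      rw [div_pow, one_pow]
      ring
    have hqj : (((1:ℝ)/2)^j) ^ (α*p) = q^j := by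
      rw [hqdef, ← Real.rpow_natCast (((1:ℝ)/2) ^ (α*p)) j, ← Real.rpow_natCast ((1:ℝ)/2) j,
        ← Real.rpow_mul (by norm_num), ← Real.rpow_mul (by norm_num), mul_comm]
    rw [h2r, Real.mul_rpow (by positivity) (by positivity), hqj]
  have hq1' : (0:ℝ) < 1 - q := by linarith
  have hgeom : ∑ j ∈ Finset.range m, q^j ≤ 1/(1-q) := by
    rw [geom_sum_eq (ne_of_lt hq1) m]
    have he : (q^m - 1)/(q - 1) = (1 - q^m)/(1 - q) := by
      rw [← neg_div_neg_eq]; congr 1 <;> ring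
    rw [he, div_le_div_iff₀ hq1' hq1']
    have : (0:ℝ) ≤ q^m := by positivity
    nlinarith
  have hcoef : (0:ℝ) ≤ (D0:ℝ)^3 * CE * ((2*r) ^ (α*p) / t^p) := by positivity
  have hsumbound : (∑ j ∈ Finset.range m, ((Used j).card : ℝ)) ≤
      (D0:ℝ)^3 * CE * ((2*r) ^ (α*p) / t^p) * (1/(1-q)) := by
    have hterm : ∀ j ∈ Finset.range m, ((Used j).card : ℝ) ≤
        (D0:ℝ)^3 * CE * ((2*r) ^ (α*p) / t^p) * q^j := by
      intro j _
      have h1 : ((Used j).card : ℝ) ≤ (D0:ℝ)^3 * ((Bad j).card : ℝ) := by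
        exact_mod_cast hUsedcard j
      calc ((Used j).card : ℝ) ≤ (D0:ℝ)^3 * ((Bad j).card : ℝ) := h1
        _ ≤ (D0:ℝ)^3 * (CE * ((2 * rad j) ^ (α*p) / t^p)) :=
            mul_le_mul_of_nonneg_left (hbadcard j) (by positivity)
        _ = (D0:ℝ)^3 * CE * ((2*r) ^ (α*p) / t^p) * q^j := by rw [hradpow j]; ring
    calc (∑ j ∈ Finset.range m, ((Used j).card : ℝ))
        ≤ ∑ j ∈ Finset.range m, (D0:ℝ)^3 * CE * ((2*r) ^ (α*p) / t^p) * q^j :=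
          Finset.sum_le_sum hterm
      _ = (D0:ℝ)^3 * CE * ((2*r) ^ (α*p) / t^p) * ∑ j ∈ Finset.range m, q^j := by
          rw [← Finset.mul_sum]
      _ ≤ (D0:ℝ)^3 * CE * ((2*r) ^ (α*p) / t^p) * (1/(1-q)) :=
          mul_le_mul_of_nonneg_left hgeom hcoef
  -- the two rpow identities
  have hI1 : (r/2) ^ (-d') = 2 ^ d' * t ^ (-s) := by
    rw [hrdef, Real.div_rpow (Real.rpow_pos_of_pos ht0 β).le (by norm_num),
      ← Real.rpow_mul ht0.le, Real.rpow_neg (by norm_num : (0:ℝ) ≤ 2),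
      div_eq_mul_inv, inv_inv, mul_neg, ← hsdef, mul_comm]
  have hI2 : (2*r) ^ (α*p) / t^p = 2 ^ (α*p) * t ^ (-s) := by
    have hexp : β*(α*p) - p = -s := by
      have h1 : β*(α*p) + β*d' = p := by linear_combination hβD
      rw [hsdef]
      linarith
    rw [hrdef, Real.mul_rpow (by norm_num) (Real.rpow_pos_of_pos ht0 β).le,
      ← Real.rpow_mul ht0.le]
    rw [mul_div_assoc, ← Real.rpow_sub ht0, hexp]
  -- put everything together
  have hfinal : ((TT.card : ℕ) : ℝ) ≤ A0 * t ^ (-s) := by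
    have hc1 : ((TT.card : ℕ) : ℝ) ≤ ((Good 0).card : ℝ) + ∑ j ∈ Finset.range m, ((Used j).card : ℝ) := by
      have := hTTcard
      push_cast
      exact_mod_cast this
    calc ((TT.card : ℕ) : ℝ) ≤ ((Good 0).card : ℝ) + ∑ j ∈ Finset.range m, ((Used j).card : ℝ) := hc1
      _ ≤ (r/2) ^ (-d') + (D0:ℝ)^3 * CE * ((2*r) ^ (α*p) / t^p) * (1/(1-q)) :=
          add_le_add hG0 hsumbound
      _ = A0 * t ^ (-s) := by
          rw [hI1, hA0def]
          rw [show (D0:ℝ)^3 * CE * ((2*r) ^ (α*p) / t^p) * (1/(1-q))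
              = ((2*r) ^ (α*p) / t^p) * ((D0:ℝ)^3 * CE * (1/(1-q))) by ring, hI2]
          ring
  rw [← hs_eq]
  refine le_trans hcovT ?_
  rw [← ENNReal.ofReal_natCast]
  exact ENNReal.ofReal_le_ofReal hfinal

/-- If `X` is doubling, `f : X → Y` is weak `(p,α)`-compactly Hölder,
and `E ⊆ X` is bounded with `dim_B E = dE`, then
`dim_B f(E) ≤ p dE / (α p + dE)`. -/
theorem minkowski_distortion_of_weakCompactlyHolder
    {X Y : Type*} [MetricSpace X] [MetricSpace Y] (hX : DoublingSpace X)
    {p α : ℝ} (hp : 1 < p) (hα : α ∈ Set.Ioo (0:ℝ) 1)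
    {f : X → Y} (hf : WeakCompactlyHolder p α f)
    {E : Set X} (hE : IsBounded E) {dE : ℝ} (hdE : dimB E = (dE : EReal)) :
    dimB (f '' E) ≤ ((p * dE / (α * p + dE) : ℝ) : EReal) := by
  classical
  rcases E.eq_empty_or_nonempty with rfl | hne
  · have hdE0 : dE = 0 := by
      have h0 : ((0:ℝ) : EReal) = (dE : EReal) := by
        rw [← hdE, dimB_empty]; rfl
      exact_mod_cast h0.symm
    rw [Set.image_empty, dimB_empty, hdE0]
    norm_num
  · have hα0 := hα.1
    have hα1 := hα.2
    have hp0 : (0:ℝ) < p := by linarith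
    have hdEnn : 0 ≤ dE := by
      have h := dimB_nonneg_of_nonempty hne
      rw [hdE] at h
      exact_mod_cast h
    obtain ⟨Cd, hCd1, hCd⟩ := hX
    have hD0 : Cd ≤ ((⌈Cd⌉₊ : ℕ) : ℝ) := Nat.le_ceil Cd
    obtain ⟨rE, hrE, CE, hCE, H0⟩ := hf ∅ isCompact_empty (1/2) ⟨by norm_num, by norm_num⟩
    have H : ∀ (I : Type) (_ : Countable I) (c : I → X) (r : ℝ), 0 < r → r < rE →
        (Pairwise fun i j => Disjoint (Metric.ball (c i) ((1/2) * r))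
          (Metric.ball (c j) ((1/2) * r))) →
        ∃ C : I → ℝ≥0∞,
          (∀ i, EMetric.diam (f '' Metric.ball (c i) r) ≤
              C i * EMetric.diam (Metric.ball (c i) r) ^ α) ∧
          ∑' i, C i ^ p ≤ ENNReal.ofReal CE :=
      fun I hI c r hr hrE' hdisj => H0 I hI c r hr hrE' (Set.empty_subset _) hdisj
    refine le_of_forall_gt_imp_ge_of_dense fun cgt hcgt => ?_
    obtain ⟨qr, hq1, hq2⟩ := EReal.exists_between_coe_real hcgt
    refine le_trans ?_ hq2.le
    have htar : p * dE / (α * p + dE) < qr := by exact_mod_cast hq1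
    have hDen : 0 < α * p + dE := by nlinarith
    have hcont : ContinuousAt (fun x : ℝ => p * x / (α * p + x)) dE := by
      apply ContinuousAt.div
      · fun_prop
      · fun_prop
      · exact ne_of_gt hDen
    have hev : ∀ᶠ x in 𝓝 dE, p * x / (α * p + x) < qr :=
      hcont.eventually_lt_const htar
    obtain ⟨δ, hδ0, hδ⟩ := Metric.eventually_nhds_iff.mp hev
    have hdist : dist (dE + δ/2) dE < δ := by
      rw [Real.dist_eq, show dE + δ/2 - dE = δ/2 by ring, abs_of_pos (by linarith)]
      linarith
    have hgd' : p * (dE + δ/2) / (α * p + (dE + δ/2)) < qr := hδ hdist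
    have hd'gt : dE < dE + δ/2 := by linarith
    have hd'0 : 0 < dE + δ/2 := by linarith
    obtain ⟨δE, hδE0, hδE1, hEcovall⟩ := coverNum_eventual_bound hdE hd'gt hd'0
    obtain ⟨A0, t0, hA01, ht00, hbound⟩ := key_bound hCd hD0 hp hα hE hne hrE hCE H hd'0
      hδE0 hδE1 (fun ρ h => (hEcovall ρ h).2)
    have hsnn : 0 ≤ p * (dE + δ/2) / (α * p + (dE + δ/2)) := by positivity
    have hle := dimB_le_poly hA01 ht00 hsnn hbound
    exact le_trans hle (by exact_mod_cast hgd'.le)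

end
end

section
/- Let (X,d) be a doubling metric space with doubling constant C_d, let 0 < c₀ ≤ C₀ < ∞ and δ ∈ (0,1) with 12·C₀·δ ≤ c₀, and suppose that for an integer k ≥ 0 we are given points {z_i^k}_{i ∈ I_k} in X with |z_i^k − z_j^k| ≥ c₀δ^k for i ≠ j, together with sets {Q_i^k}_{i ∈ I_k} that are pairwise disjoint with union X and satisfy B(z_i^k, c₀δ^k/3) ⊆ Q_i^k ⊆ B(z_i^k, 2C₀δ^k) for every i ∈ I_k. Let E ⊆ X be bounded and let N_k(E) be the number of indices i ∈ I_k with Q_i^k ∩ E ≠ ∅. Then N(E, 4C₀δ^k) ≤ N_k(E) ≤ C'·N(E, δ^k), where C' = C_d·(c₀/(3(4C₀+1)))^{−log₂ C_d} depends only on c₀, C₀ and C_d. -/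
open Filter Metric Set Topology MeasureTheory Bornology
open scoped ENNReal NNReal

noncomputable section

private lemma doubling_iterate' {X : Type*} [MetricSpace X] {Cd : ℝ} (hCd : 1 ≤ Cd)
    (hX : DoublingConst X Cd)
    (m : ℕ) (x : X) {r : ℝ} (hr : 0 < r) :
    ∃ t : Finset X, (t.card : ℝ) ≤ Cd ^ m ∧
      Metric.ball x (2 ^ m * r) ⊆ ⋃ y ∈ t, Metric.ball y r := by
  classical
  induction m generalizing x with
  | zero => exact ⟨{x}, by simp, by simp⟩
  | succ m ih =>
    obtain ⟨t, ht, hsub⟩ := hX x (2 ^ m * r) (by positivity)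
    choose f hf1 hf2 using fun y : X => ih y
    refine ⟨t.biUnion f, ?_, ?_⟩
    · have h0 : (0:ℝ) ≤ Cd ^ m := pow_nonneg (le_trans zero_le_one hCd) m
      calc ((t.biUnion f).card : ℝ) ≤ ∑ y ∈ t, ((f y).card : ℝ) := by
            exact_mod_cast Nat.cast_le.mpr Finset.card_biUnion_le
        _ ≤ ∑ _y ∈ t, Cd ^ m := Finset.sum_le_sum fun y _ => hf1 y
        _ = t.card * Cd ^ m := by rw [Finset.sum_const, nsmul_eq_mul]
        _ ≤ Cd * Cd ^ m := mul_le_mul_of_nonneg_right ht h0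
        _ = Cd ^ (m + 1) := by ring
    · intro p hp
      have hp' : p ∈ Metric.ball x (2 * (2 ^ m * r)) := by
        rw [show (2:ℝ) * (2 ^ m * r) = 2 ^ (m+1) * r by ring]; exact hp
      obtain ⟨y, hy, hpy⟩ := mem_iUnion₂.mp (hsub hp')
      obtain ⟨w, hw, hpw⟩ := mem_iUnion₂.mp (hf2 y hpy)
      exact mem_iUnion₂.mpr ⟨w, Finset.mem_biUnion.mpr ⟨y, hy, hw⟩, hpw⟩

private lemma encard_sep_le' {X : Type*} [MetricSpace X] {S : Set X} {ε r : ℝ}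
    (hsep : ∀ p ∈ S, ∀ q ∈ S, p ≠ q → ε ≤ dist p q) (h2r : 2 * r ≤ ε)
    {t : Finset X} (hcov : S ⊆ ⋃ y ∈ t, Metric.ball y r) :
    S.encard ≤ (t.card : ℕ∞) := by
  classical
  set f : X → X := fun p => if h : ∃ y ∈ t, p ∈ Metric.ball y r then h.choose else p with hf
  have hfp : ∀ p ∈ S, f p ∈ t ∧ p ∈ Metric.ball (f p) r := by
    intro p hp
    have h : ∃ y ∈ t, p ∈ Metric.ball y r := by
      simpa using mem_iUnion₂.mp (hcov hp)
    rw [hf]; simp only [dif_pos h]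
    exact ⟨h.choose_spec.1, h.choose_spec.2⟩
  have hmaps : Set.MapsTo f S (t : Set X) := fun p hp => (hfp p hp).1
  have hinj : Set.InjOn f S := by
    intro p hp q hq hfeq
    by_contra hne
    have h1 := (hfp p hp).2
    have h2 := (hfp q hq).2
    rw [hfeq] at h1
    have : dist p q < 2 * r := by
      calc dist p q ≤ dist p (f q) + dist q (f q) := dist_triangle_right _ _ _
        _ < r + r := add_lt_add h1 h2
        _ = 2 * r := by ring
    exact absurd (hsep p hp q hq hne) (by linarith)
  calc S.encard ≤ (t : Set X).encard := Set.encard_le_encard_of_injOn hmaps hinj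
    _ = t.card := Set.encard_coe_eq_coe_finsetCard t

private lemma encard_iUnion_le' {X : Type*} : ∀ {n : ℕ} (S : Fin n → Set X),
    ((⋃ j, S j).encard : ℝ≥0∞) ≤ ∑ j, ((S j).encard : ℝ≥0∞) := by
  intro n
  induction n with
  | zero => simp
  | succ n ih =>
    intro S
    have : (⋃ j, S j) = S 0 ∪ ⋃ j : Fin n, S j.succ := by
      ext x; simp [Fin.exists_fin_succ]
    rw [this, Fin.sum_univ_succ]
    calc ((S 0 ∪ ⋃ j : Fin n, S j.succ).encard : ℝ≥0∞)
        ≤ (((S 0).encard + (⋃ j : Fin n, S j.succ).encard : ℕ∞) : ℝ≥0∞) := by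
          exact_mod_cast Set.encard_union_le _ _
      _ = ((S 0).encard : ℝ≥0∞) + ((⋃ j : Fin n, S j.succ).encard : ℝ≥0∞) := by
          exact_mod_cast ENat.toENNReal_add _ _
      _ ≤ ((S 0).encard : ℝ≥0∞) + ∑ j : Fin n, ((S j.succ).encard : ℝ≥0∞) :=
          add_le_add le_rfl (ih _)

private lemma coverNum_le_card {X : Type*} [MetricSpace X] {E : Set X} {r : ℝ} {ι : Type*}
    (V : ι → Set X) (t : Finset ι)
    (hd : ∀ i ∈ t, EMetric.diam (V i) ≤ ENNReal.ofReal r)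
    (hc : E ⊆ ⋃ i ∈ t, V i) : coverNum E r ≤ t.card := by
  classical
  have hlen : t.toList.length = t.card := Finset.length_toList t
  set U : Fin t.card → Set X := fun j => V (t.toList.get (Fin.cast hlen.symm j)) with hU
  refine iInf_le_of_le t.card (iInf_le_of_le ?_ le_rfl)
  refine ⟨U, fun j => hd _ (Finset.mem_toList.mp (List.get_mem _ _)), fun x hx => ?_⟩
  obtain ⟨i, hi, hxi⟩ := mem_iUnion₂.mp (hc hx)
  obtain ⟨j, hj⟩ := List.mem_iff_get.mp (Finset.mem_toList.mpr hi)
  refine mem_iUnion.mpr ⟨Fin.cast hlen j, ?_⟩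
  have hj' : t.toList.get (Fin.cast hlen.symm (Fin.cast hlen j)) = i := hj
  show x ∈ V (t.toList.get (Fin.cast hlen.symm (Fin.cast hlen j)))
  rw [hj']; exact hxi

set_option maxHeartbeats 1000000 in
/-- Comparison of covering numbers with dyadic cube counts at a fixed level `k`:
`N(E, 4C₀δ^k) ≤ N_k(E) ≤ C' N(E, δ^k)` with
`C' = C_d (c₀ / (3(4C₀+1)))^{-log₂ C_d}`. -/
theorem coverNum_dyadic_comparison {X : Type*} [MetricSpace X]
    {Cd : ℝ} (hCd : 1 ≤ Cd) (hX : DoublingConst X Cd)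
    {c₀ C₀ δ : ℝ} (hc₀ : 0 < c₀) (hcC : c₀ ≤ C₀) (hδ : δ ∈ Set.Ioo (0:ℝ) 1)
    (h12 : 12 * C₀ * δ ≤ c₀) {k : ℕ}
    {ι : Type*} (z : ι → X) (Q : ι → Set X)
    (hsep : ∀ i j : ι, i ≠ j → c₀ * δ ^ k ≤ dist (z i) (z j))
    (hdisj : ∀ i j : ι, i ≠ j → Disjoint (Q i) (Q j))
    (hcov : ⋃ i, Q i = Set.univ)
    (hlow : ∀ i, Metric.ball (z i) (c₀ * δ ^ k / 3) ⊆ Q i)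
    (hup : ∀ i, Q i ⊆ Metric.ball (z i) (2 * C₀ * δ ^ k))
    {E : Set X} (hE : IsBounded E) :
    coverNum E (4 * C₀ * δ ^ k) ≤ ({i : ι | (Q i ∩ E).Nonempty}.encard : ℝ≥0∞) ∧
    ({i : ι | (Q i ∩ E).Nonempty}.encard : ℝ≥0∞) ≤
      ENNReal.ofReal (Cd * (c₀ / (3 * (4 * C₀ + 1))) ^ (-(Real.logb 2 Cd))) *
        coverNum E (δ ^ k) := by
  classical
  have hδk : (0:ℝ) < δ ^ k := pow_pos hδ.1 k
  have hC₀ : (0:ℝ) < C₀ := lt_of_lt_of_le hc₀ hcC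
  have hCd0 : (0:ℝ) < Cd := lt_of_lt_of_le one_pos hCd
  constructor
  · -- first inequality
    set S := {i : ι | (Q i ∩ E).Nonempty} with hSdef
    rcases eq_or_ne S.encard ⊤ with htop | hfin
    · rw [htop]; exact le_top
    · have hSfin : S.Finite := Set.encard_ne_top_iff.mp hfin
      have hd : ∀ i ∈ hSfin.toFinset, EMetric.diam (Q i) ≤ ENNReal.ofReal (4 * C₀ * δ ^ k) := by
        intro i _
        calc EMetric.diam (Q i) ≤ EMetric.diam (Metric.ball (z i) (2 * C₀ * δ ^ k)) :=
              EMetric.diam_mono (hup i)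
          _ = EMetric.diam (Metric.eball (z i) (ENNReal.ofReal (2 * C₀ * δ ^ k))) := by
              rw [Metric.emetric_ball]
          _ ≤ 2 * ENNReal.ofReal (2 * C₀ * δ ^ k) := EMetric.diam_ball
          _ = ENNReal.ofReal (4 * C₀ * δ ^ k) := by
              rw [← ENNReal.ofReal_ofNat 2, ← ENNReal.ofReal_mul (by norm_num : (0:ℝ) ≤ (2:ℝ))]
              congr 1; ring
      have hc : E ⊆ ⋃ i ∈ hSfin.toFinset, Q i := by
        intro x hx
        have hxu : x ∈ ⋃ i, Q i := by rw [hcov]; trivial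
        obtain ⟨i, hi⟩ := mem_iUnion.mp hxu
        exact mem_iUnion₂.mpr ⟨i, hSfin.mem_toFinset.mpr ⟨x, hi, hx⟩, hi⟩
      have h1 := coverNum_le_card Q hSfin.toFinset hd hc
      rw [hSfin.encard_eq_coe_toFinset_card, ENat.toENNReal_coe]
      exact h1
  · -- second inequality
    set C' := Cd * (c₀ / (3 * (4 * C₀ + 1))) ^ (-(Real.logb 2 Cd)) with hC'
    have hs : (0:ℝ) < c₀ / (3 * (4 * C₀ + 1)) := by positivity
    have hC'pos : (0:ℝ) < C' := by
      have := Real.rpow_pos_of_pos hs (-(Real.logb 2 Cd)); positivity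
    rcases eq_or_ne (coverNum E (δ ^ k)) ⊤ with htop | hne
    · rw [htop, ENNReal.mul_top (by simp [ENNReal.ofReal_eq_zero, not_le, hC'pos])]
      exact le_top
    · have hP : ∃ n : ℕ, ∃ U : Fin n → Set X,
          (∀ i, EMetric.diam (U i) ≤ ENNReal.ofReal (δ ^ k)) ∧ E ⊆ ⋃ i, U i := by
        by_contra h
        exact hne (iInf_eq_top.mpr fun n => iInf_eq_top.mpr fun hp => absurd ⟨n, hp⟩ h)
      set n₀ := Nat.find hP with hn₀
      obtain ⟨U, hUd, hUc⟩ := Nat.find_spec hP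
      have hn₀le : (n₀ : ℝ≥0∞) ≤ coverNum E (δ ^ k) := by
        refine le_iInf fun n => le_iInf fun hp => ?_
        exact_mod_cast Nat.cast_le.mpr (Nat.find_min' hP hp)
      -- setup for the counting
      set T : ℝ := 3 * (4 * C₀ + 1) / c₀ with hT
      have hT1 : (1:ℝ) ≤ T := by
        rw [hT, le_div_iff₀ hc₀]; nlinarith
      set L := Real.logb 2 T with hL
      have hL0 : 0 ≤ L := Real.logb_nonneg (by norm_num) hT1
      set m := ⌈L⌉₊ with hm
      have h2m : T ≤ (2:ℝ) ^ m := by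
        have h1 : (2:ℝ) ^ L ≤ (2:ℝ) ^ (m : ℝ) :=
          Real.rpow_le_rpow_of_exponent_le (by norm_num) (Nat.le_ceil L)
        rw [Real.rpow_natCast] at h1
        rwa [hL, Real.rpow_logb (by norm_num) (by norm_num) (lt_of_lt_of_le one_pos hT1)] at h1
      have hr3 : (0:ℝ) < c₀ * δ ^ k / 3 := by positivity
      set R : ℝ := 2 ^ m * (c₀ * δ ^ k / 3) with hR
      have hRle : (4 * C₀ + 1) * δ ^ k ≤ R := by
        have h := mul_le_mul_of_nonneg_right h2m hr3.le
        calc (4 * C₀ + 1) * δ ^ k = T * (c₀ * δ ^ k / 3) := by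
              rw [hT]; field_simp
          _ ≤ R := h
      -- key counting estimate
      have key : ∀ u : X,
          ({i : ι | z i ∈ Metric.ball u R}.encard : ℝ≥0∞) ≤ ENNReal.ofReal (Cd ^ m) := by
        intro u
        obtain ⟨t, htc, hts⟩ := doubling_iterate' hCd hX m u hr3
        set A := {i : ι | z i ∈ Metric.ball u R} with hA
        have hzinj : Set.InjOn z A := by
          intro i _ j _ hij
          by_contra hne'
          have := hsep i j hne'
          rw [hij, dist_self] at this
          nlinarith
        have hsepA : ∀ p ∈ z '' A, ∀ q ∈ z '' A, p ≠ q → c₀ * δ ^ k ≤ dist p q := by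
          rintro p ⟨i, _, rfl⟩ q ⟨j, _, rfl⟩ hpq
          exact hsep i j (fun h => hpq (by rw [h]))
        have hcovA : z '' A ⊆ ⋃ y ∈ t, Metric.ball y (c₀ * δ ^ k / 3) := by
          rintro p ⟨i, hi, rfl⟩
          exact hts hi
        have h1 : (z '' A).encard ≤ (t.card : ℕ∞) :=
          encard_sep_le' hsepA (by linarith) hcovA
        have h2 : A.encard = (z '' A).encard := (hzinj.encard_image).symm
        calc (A.encard : ℝ≥0∞) ≤ ((t.card : ℕ∞) : ℝ≥0∞) := by
              rw [h2]; exact_mod_cast ENat.toENNReal_le.mpr h1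
          _ = ENNReal.ofReal (t.card : ℝ) := by
              rw [ENat.toENNReal_coe, ENNReal.ofReal_natCast]
          _ ≤ ENNReal.ofReal (Cd ^ m) := ENNReal.ofReal_le_ofReal htc
      -- constant bound
      have hconst : (Cd : ℝ) ^ m ≤ C' := by
        have hmle : (m : ℝ) ≤ L + 1 := (Nat.ceil_lt_add_one hL0).le
        have h2 : Cd ^ (m : ℝ) ≤ Cd ^ (L + 1) :=
          Real.rpow_le_rpow_of_exponent_le hCd hmle
        have hTs : T = (c₀ / (3 * (4 * C₀ + 1)))⁻¹ := by rw [hT, inv_div]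
        have h4 : Cd ^ L = (c₀ / (3 * (4 * C₀ + 1))) ^ (-(Real.logb 2 Cd)) := by
          rw [Real.rpow_def_of_pos hCd0, Real.rpow_def_of_pos hs, hL, hTs]
          simp only [Real.logb, Real.log_inv]
          congr 1; ring
        calc Cd ^ m = Cd ^ (m : ℝ) := (Real.rpow_natCast Cd m).symm
          _ ≤ Cd ^ (L + 1) := h2
          _ = Cd * Cd ^ L := by rw [Real.rpow_add hCd0, Real.rpow_one]; ring
          _ = C' := by rw [h4, hC']
      -- per-cover-set bound
      have perj : ∀ j : Fin n₀,
          ({i : ι | (Q i ∩ E ∩ U j).Nonempty}.encard : ℝ≥0∞) ≤ ENNReal.ofReal C' := by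
        intro j
        set Sj := {i : ι | (Q i ∩ E ∩ U j).Nonempty} with hSj
        rcases Set.eq_empty_or_nonempty Sj with hemp | ⟨i₀, hi₀⟩
        · simp [hemp]
        · obtain ⟨p₀, hp₀⟩ := hi₀
          have hsub : Sj ⊆ {i : ι | z i ∈ Metric.ball p₀ R} := by
            rintro i ⟨p, hp⟩
            have hd1 : dist (z i) p < 2 * C₀ * δ ^ k := by
              have := hup i hp.1.1
              rwa [Metric.mem_ball, dist_comm] at this
            have hd2 : dist p p₀ ≤ δ ^ k := by
              have he := EMetric.edist_le_diam_of_mem hp.2 hp₀.2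
              have := le_trans he (hUd j)
              rw [edist_dist] at this
              exact (ENNReal.ofReal_le_ofReal_iff hδk.le).mp this
            have : dist (z i) p₀ < R := by
              have h5 : (2 * C₀ + 1) * δ ^ k ≤ (4 * C₀ + 1) * δ ^ k := by nlinarith
              calc dist (z i) p₀ ≤ dist (z i) p + dist p p₀ := dist_triangle _ _ _
                _ < 2 * C₀ * δ ^ k + δ ^ k := by linarith
                _ = (2 * C₀ + 1) * δ ^ k := by ring
                _ ≤ R := le_trans h5 hRle
            exact this
          calc (Sj.encard : ℝ≥0∞) ≤ ({i : ι | z i ∈ Metric.ball p₀ R}.encard : ℝ≥0∞) := by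
                exact_mod_cast ENat.toENNReal_le.mpr (Set.encard_mono hsub)
            _ ≤ ENNReal.ofReal (Cd ^ m) := key p₀
            _ ≤ ENNReal.ofReal C' := ENNReal.ofReal_le_ofReal hconst
      -- combine
      have hTsub : {i : ι | (Q i ∩ E).Nonempty} ⊆
          ⋃ j : Fin n₀, {i : ι | (Q i ∩ E ∩ U j).Nonempty} := by
        rintro i ⟨x, hxQ, hxE⟩
        obtain ⟨j, hj⟩ := mem_iUnion.mp (hUc hxE)
        exact mem_iUnion.mpr ⟨j, ⟨x, ⟨hxQ, hxE⟩, hj⟩⟩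
      calc ({i : ι | (Q i ∩ E).Nonempty}.encard : ℝ≥0∞)
          ≤ ((⋃ j : Fin n₀, {i : ι | (Q i ∩ E ∩ U j).Nonempty}).encard : ℝ≥0∞) := by
            exact_mod_cast ENat.toENNReal_le.mpr (Set.encard_mono hTsub)
        _ ≤ ∑ j : Fin n₀, ({i : ι | (Q i ∩ E ∩ U j).Nonempty}.encard : ℝ≥0∞) :=
            encard_iUnion_le' _
        _ ≤ ∑ _j : Fin n₀, ENNReal.ofReal C' := Finset.sum_le_sum fun j _ => perj j
        _ = ENNReal.ofReal C' * n₀ := by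
            rw [Finset.sum_const, Finset.card_univ, Fintype.card_fin, nsmul_eq_mul, mul_comm]
        _ ≤ ENNReal.ofReal C' * coverNum E (δ ^ k) := mul_le_mul_right hn₀le _


end
end
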